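/- Under the factorization assumptions of the separable multi-agent MDP, the product policy π*(a|s) = ∏_i π_i*(a_i|s_i), where each π_i* is optimal for the i-th single-agent MDP, is an optimal policy for the joint multi-agent MDP. -/

import Mathlib

open scoped BigOperators

/-- A stochastic kernel on finite spaces. -/
def IsKernel {S A : Type} [Fintype S] (P : S → A → S → ℝ) : Prop :=
  (∀ s a s', 0 ≤ P s a s') ∧ ∀ s a, ∑ s', P s a s' = 1

/-- A (stationary, stochastic) policy. -/
def IsPolicy {S A : Type} [Fintype A] (π : S → A → ℝ) : Prop :=
  (∀ s a, 0 ≤ π s a) ∧ ∀ s, ∑ a, π s a = 1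

/-- Push a state distribution forward one step under a policy. -/
noncomputable def push {S A : Type} [Fintype S] [Fintype A]
    (P : S → A → S → ℝ) (π : S → A → ℝ) (d : S → ℝ) : S → ℝ :=
  fun s' => ∑ s, ∑ a, d s * π s a * P s a s'

/-- Expected one-step reward under a state distribution and policy. -/
noncomputable def expReward {S A : Type} [Fintype S] [Fintype A]
    (P : S → A → S → ℝ) (R : S → A → S → ℝ) (π : S → A → ℝ) (d : S → ℝ) : ℝ :=
  ∑ s, ∑ a, ∑ s', d s * π s a * P s a s' * R s a s'

/-- Value function of a policy: expected discounted return from state s. -/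
noncomputable def policyValue {S A : Type} [Fintype S] [Fintype A] [DecidableEq S]
    (P : S → A → S → ℝ) (R : S → A → S → ℝ) (γ : ℝ) (π : S → A → ℝ) (s : S) : ℝ :=
  ∑' k : ℕ, γ ^ k *
    expReward P R π ((push P π)^[k] (fun s' => if s' = s then 1 else 0))

/-- Optimal value function. -/
noncomputable def optValue {S A : Type} [Fintype S] [Fintype A] [DecidableEq S]
    (P : S → A → S → ℝ) (R : S → A → S → ℝ) (γ : ℝ) (s : S) : ℝ :=
  ⨆ π : {π : S → A → ℝ // IsPolicy π}, policyValue P R γ π.1 s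

set_option linter.unusedSectionVars false

section MDP

variable {S A : Type} [Fintype S] [Fintype A] [DecidableEq S]

/-- one-step mean reward under a policy -/
noncomputable def rbar (P : S → A → S → ℝ) (R : S → A → S → ℝ) (π : S → A → ℝ) (s : S) : ℝ :=
  ∑ a, ∑ s', π s a * P s a s' * R s a s'

def IsDist (d : S → ℝ) : Prop := (∀ s, 0 ≤ d s) ∧ ∑ s, d s = 1

noncomputable def delta (s : S) : S → ℝ := fun s' => if s' = s then 1 else 0

lemma isDist_delta (s : S) : IsDist (delta s) := by
  constructor
  · intro t; unfold delta; split <;> norm_num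
  · simp [delta]

lemma expReward_eq (P R : S → A → S → ℝ) (π : S → A → ℝ) (d : S → ℝ) :
    expReward P R π d = ∑ s, d s * rbar P R π s := by
  unfold expReward rbar
  refine Finset.sum_congr rfl fun s _ => ?_
  rw [Finset.mul_sum]
  refine Finset.sum_congr rfl fun a _ => ?_
  rw [Finset.mul_sum]
  refine Finset.sum_congr rfl fun s' _ => ?_
  ring

lemma push_isDist {P : S → A → S → ℝ} {π : S → A → ℝ} (hP : IsKernel P) (hπ : IsPolicy π)
    {d : S → ℝ} (hd : IsDist d) : IsDist (push P π d) := by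
  constructor
  · intro s'
    refine Finset.sum_nonneg fun s _ => Finset.sum_nonneg fun a _ => ?_
    exact mul_nonneg (mul_nonneg (hd.1 s) (hπ.1 s a)) (hP.1 s a s')
  · unfold push
    rw [Finset.sum_comm]
    have : ∀ s : S, ∑ s' : S, ∑ a, d s * π s a * P s a s' = d s := by
      intro s
      rw [Finset.sum_comm]
      have : ∀ a : A, ∑ s' : S, d s * π s a * P s a s' = d s * π s a := by
        intro a
        rw [← Finset.mul_sum, hP.2 s a, mul_one]
      rw [Finset.sum_congr rfl fun a _ => this a, ← Finset.mul_sum, hπ.2 s, mul_one]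
    rw [Finset.sum_congr rfl fun s _ => this s, hd.2]

lemma iterate_push_isDist {P : S → A → S → ℝ} {π : S → A → ℝ} (hP : IsKernel P) (hπ : IsPolicy π)
    {d : S → ℝ} (hd : IsDist d) (k : ℕ) : IsDist ((push P π)^[k] d) := by
  induction k with
  | zero => simpa using hd
  | succ k ih => rw [Function.iterate_succ_apply']; exact push_isDist hP hπ ih

lemma dist_le_one {d : S → ℝ} (hd : IsDist d) (s : S) : d s ≤ 1 := by
  rw [← hd.2]
  exact Finset.single_le_sum (fun t _ => hd.1 t) (Finset.mem_univ s)

lemma abs_inner_le {d f : S → ℝ} (hd : IsDist d) : |∑ s, d s * f s| ≤ ∑ s, |f s| := by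
  calc |∑ s, d s * f s| ≤ ∑ s, |d s * f s| := Finset.abs_sum_le_sum_abs _ _
    _ ≤ ∑ s, |f s| := by
        refine Finset.sum_le_sum fun s _ => ?_
        rw [abs_mul, abs_of_nonneg (hd.1 s)]
        calc d s * |f s| ≤ 1 * |f s| := by
              exact mul_le_mul_of_nonneg_right (dist_le_one hd s) (abs_nonneg _)
          _ = |f s| := one_mul _

lemma summable_value {P : S → A → S → ℝ} {π : S → A → ℝ} (hP : IsKernel P) (hπ : IsPolicy π)
    (R : S → A → S → ℝ) {γ : ℝ} (hγ0 : 0 ≤ γ) (hγ1 : γ < 1) {d : S → ℝ} (hd : IsDist d) :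
    Summable (fun k : ℕ => γ ^ k * expReward P R π ((push P π)^[k] d)) := by
  refine Summable.of_norm ?_
  have hbound : ∀ k : ℕ, ‖γ ^ k * expReward P R π ((push P π)^[k] d)‖ ≤
      (∑ s, |rbar P R π s|) * γ ^ k := by
    intro k
    rw [norm_mul, norm_pow, Real.norm_eq_abs, Real.norm_eq_abs, abs_of_nonneg hγ0, mul_comm]
    refine mul_le_mul_of_nonneg_right ?_ (pow_nonneg hγ0 k)
    rw [expReward_eq]
    exact abs_inner_le (iterate_push_isDist hP hπ hd k)
  exact Summable.of_nonneg_of_le (fun k => norm_nonneg _) hbound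
    ((summable_geometric_of_lt_one hγ0 hγ1).mul_left _)

end MDP

section MDP2
variable {S A : Type} [Fintype S] [Fintype A] [DecidableEq S]

lemma push_linear (P : S → A → S → ℝ) (π : S → A → ℝ) (c : S → ℝ) (e : S → S → ℝ) :
    push P π (fun t => ∑ s, c s * e s t) = fun s' => ∑ s, c s * push P π (e s) s' := by
  funext s'
  unfold push
  simp only [Finset.sum_mul, Finset.mul_sum]
  conv_rhs => rw [Finset.sum_comm]
  refine Finset.sum_congr rfl fun t _ => ?_
  conv_lhs => rw [Finset.sum_comm]
  exact Finset.sum_congr rfl fun s _ => Finset.sum_congr rfl fun a _ => by ring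

lemma self_expand (d : S → ℝ) : d = fun t => ∑ s, d s * delta s t := by
  funext t
  simp [delta, mul_comm]

lemma iterate_push_expand (P : S → A → S → ℝ) (π : S → A → ℝ) (k : ℕ) (d : S → ℝ) :
    (push P π)^[k] d = fun t => ∑ s, d s * (push P π)^[k] (delta s) t := by
  induction k generalizing d with
  | zero => exact self_expand d
  | succ k ih =>
    rw [Function.iterate_succ_apply, ih (push P π d)]
    funext t
    have hpd : ∀ u, push P π d u = ∑ s, d s * push P π (delta s) u := by
      intro u
      conv_lhs => rw [self_expand d, push_linear]
    have hrhs : ∀ s, (push P π)^[k + 1] (delta s) t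
        = ∑ u, push P π (delta s) u * (push P π)^[k] (delta u) t := by
      intro s
      rw [Function.iterate_succ_apply, ih (push P π (delta s))]
    simp only [hrhs, hpd, Finset.sum_mul, Finset.mul_sum]
    rw [Finset.sum_comm]
    exact Finset.sum_congr rfl fun u _ => Finset.sum_congr rfl fun s _ => by ring

lemma expReward_iterate_linear (P R : S → A → S → ℝ) (π : S → A → ℝ) (k : ℕ) (d : S → ℝ) :
    expReward P R π ((push P π)^[k] d)
      = ∑ s, d s * expReward P R π ((push P π)^[k] (delta s)) := by
  conv_lhs => rw [iterate_push_expand P π k d]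
  simp only [expReward_eq, Finset.sum_mul, Finset.mul_sum]
  rw [Finset.sum_comm]
  exact Finset.sum_congr rfl fun t _ => Finset.sum_congr rfl fun u _ => by ring

lemma push_delta (P : S → A → S → ℝ) (π : S → A → ℝ) (s : S) :
    push P π (delta s) = fun s' => ∑ a, π s a * P s a s' := by
  funext s'
  unfold push delta
  rw [Finset.sum_eq_single s]
  · simp
  · intro t _ hts
    simp [if_neg hts]
  · simp

lemma policyValue_eq_tsum (P R : S → A → S → ℝ) (γ : ℝ) (π : S → A → ℝ) (s : S) :
    policyValue P R γ π s
      = ∑' k : ℕ, γ ^ k * expReward P R π ((push P π)^[k] (delta s)) := rfl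

theorem bellman_eq {P : S → A → S → ℝ} (R : S → A → S → ℝ) {π : S → A → ℝ}
    (hP : IsKernel P) (hπ : IsPolicy π) {γ : ℝ} (hγ0 : 0 ≤ γ) (hγ1 : γ < 1) (s : S) :
    policyValue P R γ π s = ∑ a, π s a *
      ((∑ s', P s a s' * R s a s') + γ * ∑ s', P s a s' * policyValue P R γ π s') := by
  have hsum : ∀ t : S, Summable
      (fun k : ℕ => γ ^ k * expReward P R π ((push P π)^[k] (delta t))) :=
    fun t => summable_value hP hπ R hγ0 hγ1 (isDist_delta t)
  rw [policyValue_eq_tsum, Summable.tsum_eq_zero_add (hsum s)]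
  have hshift : ∀ k : ℕ,
      γ ^ (k + 1) * expReward P R π ((push P π)^[k + 1] (delta s))
        = ∑ t, γ * ((∑ a, π s a * P s a t) *
            (γ ^ k * expReward P R π ((push P π)^[k] (delta t)))) := by
    intro k
    rw [Function.iterate_succ_apply, push_delta,
      expReward_iterate_linear P R π k (fun s' => ∑ a, π s a * P s a s'), Finset.mul_sum]
    exact Finset.sum_congr rfl fun t _ => by ring
  rw [tsum_congr hshift, Summable.tsum_finsetSum (fun t _ => by
    exact (Summable.mul_left _ ((hsum t).mul_left _)))]
  have : ∀ t : S, ∑' k : ℕ, γ * ((∑ a, π s a * P s a t) *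
      (γ ^ k * expReward P R π ((push P π)^[k] (delta t))))
        = γ * ((∑ a, π s a * P s a t) * policyValue P R γ π t) := by
    intro t
    rw [tsum_mul_left, tsum_mul_left, policyValue_eq_tsum]
  rw [Finset.sum_congr rfl fun t _ => this t]
  -- now goal: E(δ_s) + ∑_t γ * ((∑_a π P) * V t) = ∑_a π * (rA + γ ∑ P V)
  rw [expReward_eq]
  simp only [pow_zero, one_mul, Function.iterate_zero_apply]
  rw [show (∑ t, delta s t * rbar P R π t) = rbar P R π s by
    unfold delta; rw [Finset.sum_eq_single s] <;> simp +contextual]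
  unfold rbar
  simp only [Finset.mul_sum, Finset.sum_mul, mul_add, Finset.sum_add_distrib]
  congr 1
  · exact Finset.sum_congr rfl fun a _ => Finset.sum_congr rfl fun s' _ => by ring
  · rw [Finset.sum_comm]
    exact Finset.sum_congr rfl fun a _ => Finset.sum_congr rfl fun t _ => by ring


lemma inner_push (P : S → A → S → ℝ) (π : S → A → ℝ) (d V : S → ℝ) :
    ∑ s', push P π d s' * V s'
      = ∑ t, d t * (∑ a, π t a * ∑ s', P t a s' * V s') := by
  unfold push
  simp only [Finset.sum_mul, Finset.mul_sum]
  rw [Finset.sum_comm]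
  refine Finset.sum_congr rfl fun t _ => ?_
  rw [Finset.sum_comm]
  exact Finset.sum_congr rfl fun a _ => Finset.sum_congr rfl fun s' _ => by ring

lemma inner_delta (s : S) (V : S → ℝ) : ∑ t, delta s t * V t = V s := by
  unfold delta
  rw [Finset.sum_eq_single s] <;> simp +contextual

theorem value_le {P R : S → A → S → ℝ} {π : S → A → ℝ}
    (hP : IsKernel P) (hπ : IsPolicy π) {γ : ℝ} (hγ0 : 0 ≤ γ) (hγ1 : γ < 1) (V : S → ℝ)
    (h : ∀ s, (∑ a, π s a * ((∑ s', P s a s' * R s a s') + γ * ∑ s', P s a s' * V s')) ≤ V s)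
    (s : S) : policyValue P R γ π s ≤ V s := by
  set d : ℕ → S → ℝ := fun k => (push P π)^[k] (delta s) with hd
  have hdist : ∀ k, IsDist (d k) := fun k => iterate_push_isDist hP hπ (isDist_delta s) k
  -- one-step inequality
  have step : ∀ k, ∑ t, d k t * rbar P R π t + γ * ∑ s', d (k + 1) s' * V s'
      ≤ ∑ t, d k t * V t := by
    intro k
    have hsucc : d (k + 1) = push P π (d k) := Function.iterate_succ_apply' _ _ _
    rw [hsucc, inner_push, Finset.mul_sum, ← Finset.sum_add_distrib]
    refine Finset.sum_le_sum fun t _ => ?_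
    have ht := h t
    have hexp : ∑ a, π t a * ((∑ s', P t a s' * R t a s') + γ * ∑ s', P t a s' * V s')
        = rbar P R π t + γ * ∑ a, π t a * ∑ s', P t a s' * V s' := by
      unfold rbar
      simp only [mul_add, Finset.sum_add_distrib, Finset.mul_sum]
      congr 1
      · exact Finset.sum_congr rfl fun a _ => Finset.sum_congr rfl fun s' _ => by ring
      · exact Finset.sum_congr rfl fun a _ => Finset.sum_congr rfl fun s' _ => by ring
    rw [hexp] at ht
    calc d k t * rbar P R π t + γ * (d k t * (∑ a, π t a * ∑ s', P t a s' * V s'))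
        = d k t * (rbar P R π t + γ * ∑ a, π t a * ∑ s', P t a s' * V s') := by ring
      _ ≤ d k t * V t := mul_le_mul_of_nonneg_left ht ((hdist k).1 t)
  -- partial sums
  have hPartial : ∀ N : ℕ,
      (∑ k ∈ Finset.range N, γ ^ k * expReward P R π (d k)) + γ ^ N * ∑ t, d N t * V t
        ≤ ∑ t, d 0 t * V t := by
    intro N
    induction N with
    | zero => simp
    | succ N ih =>
      refine le_trans ?_ ih
      rw [Finset.sum_range_succ]
      have : γ ^ N * expReward P R π (d N) + γ ^ (N + 1) * ∑ t, d (N + 1) t * V t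
          ≤ γ ^ N * ∑ t, d N t * V t :=
        calc γ ^ N * expReward P R π (d N) + γ ^ (N + 1) * ∑ t, d (N + 1) t * V t
            = γ ^ N * (∑ t, d N t * rbar P R π t + γ * ∑ t, d (N + 1) t * V t) := by
              rw [expReward_eq]; ring
          _ ≤ γ ^ N * ∑ t, d N t * V t :=
              mul_le_mul_of_nonneg_left (step N) (pow_nonneg hγ0 N)
      linarith
  have hd0 : ∑ t, d 0 t * V t = V s := by
    simpa [hd] using inner_delta s V
  set C : ℝ := ∑ t, |V t| with hC
  have hpart : ∀ N : ℕ, (∑ k ∈ Finset.range N, γ ^ k * expReward P R π (d k))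
      ≤ V s + γ ^ N * C := by
    intro N
    have h1 := hPartial N
    rw [hd0] at h1
    have h2 : -(γ ^ N * ∑ t, d N t * V t) ≤ γ ^ N * C := by
      rw [← mul_neg]
      refine mul_le_mul_of_nonneg_left ?_ (pow_nonneg hγ0 N)
      calc -(∑ t, d N t * V t) ≤ |∑ t, d N t * V t| := neg_le_abs _
        _ ≤ C := abs_inner_le (hdist N)
    linarith
  have hsummable : Summable (fun k : ℕ => γ ^ k * expReward P R π (d k)) :=
    summable_value hP hπ R hγ0 hγ1 (isDist_delta s)
  have htend : Filter.Tendsto (fun N => ∑ k ∈ Finset.range N, γ ^ k * expReward P R π (d k))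
      Filter.atTop (nhds (policyValue P R γ π s)) :=
    hsummable.hasSum.tendsto_sum_nat
  have htend2 : Filter.Tendsto (fun N : ℕ => V s + γ ^ N * C) Filter.atTop (nhds (V s)) := by
    have : Filter.Tendsto (fun N : ℕ => γ ^ N) Filter.atTop (nhds 0) :=
      tendsto_pow_atTop_nhds_zero_of_lt_one hγ0 hγ1
    have := this.mul_const C
    simpa using Filter.Tendsto.const_add (V s) this
  exact le_of_tendsto_of_tendsto' htend htend2 hpart

lemma policyValue_neg (P R : S → A → S → ℝ) (γ : ℝ) (π : S → A → ℝ) (s : S) :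
    policyValue P (fun s a s' => -(R s a s')) γ π s = -policyValue P R γ π s := by
  unfold policyValue expReward
  rw [← tsum_neg]
  refine tsum_congr fun k => ?_
  simp [Finset.sum_neg_distrib, mul_neg]

theorem value_ge {P R : S → A → S → ℝ} {π : S → A → ℝ}
    (hP : IsKernel P) (hπ : IsPolicy π) {γ : ℝ} (hγ0 : 0 ≤ γ) (hγ1 : γ < 1) (V : S → ℝ)
    (h : ∀ s, V s ≤ ∑ a, π s a * ((∑ s', P s a s' * R s a s') + γ * ∑ s', P s a s' * V s'))
    (s : S) : V s ≤ policyValue P R γ π s := by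
  have := value_le (R := fun s a s' => -(R s a s')) hP hπ hγ0 hγ1 (fun t => -(V t)) ?_ s
  · rw [policyValue_neg] at this
    linarith
  · intro t
    have ht := h t
    have : ∑ a, π t a * ((∑ s', P t a s' * -R t a s') + γ * ∑ s', P t a s' * -V s')
        = -∑ a, π t a * ((∑ s', P t a s' * R t a s') + γ * ∑ s', P t a s' * V s') := by
      rw [← Finset.sum_neg_distrib]
      refine Finset.sum_congr rfl fun a _ => ?_
      simp only [mul_neg, Finset.sum_neg_distrib]
      ring
    rw [this]
    linarith


theorem q_le_value {P R : S → A → S → ℝ} {π : S → A → ℝ}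
    (hP : IsKernel P) (hπ : IsPolicy π) {γ : ℝ} (hγ0 : 0 ≤ γ) (hγ1 : γ < 1)
    (hopt : ∀ π' : S → A → ℝ, IsPolicy π' → ∀ t,
      policyValue P R γ π' t ≤ policyValue P R γ π t)
    (s₀ : S) (a₀ : A) :
    (∑ s', P s₀ a₀ s' * R s₀ a₀ s') + γ * ∑ s', P s₀ a₀ s' * policyValue P R γ π s'
      ≤ policyValue P R γ π s₀ := by
  classical
  by_contra hlt
  push_neg at hlt
  set Vp : S → ℝ := policyValue P R γ π with hVp
  set Q0 : ℝ := (∑ s', P s₀ a₀ s' * R s₀ a₀ s') + γ * ∑ s', P s₀ a₀ s' * Vp s' with hQ0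
  set π' : S → A → ℝ := fun t a => if t = s₀ then (if a = a₀ then 1 else 0) else π t a with hπ'def
  have hπ' : IsPolicy π' := by
    constructor
    · intro t a
      simp only [hπ'def]
      split
      · split <;> norm_num
      · exact hπ.1 t a
    · intro t
      simp only [hπ'def]
      split
      · simp
      · exact hπ.2 t
  set V' : S → ℝ := fun t => if t = s₀ then Q0 else Vp t with hV'def
  have hV'ge : ∀ t, Vp t ≤ V' t := by
    intro t
    simp only [hV'def]
    split
    · rename_i h; subst h; exact hlt.le
    · exact le_rfl
  have hmono : ∀ t a, ∑ s', P t a s' * Vp s' ≤ ∑ s', P t a s' * V' s' := fun t a =>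
    Finset.sum_le_sum fun s' _ => mul_le_mul_of_nonneg_left (hV'ge s') (hP.1 t a s')
  have hyp : ∀ t, V' t ≤ ∑ a, π' t a *
      ((∑ s', P t a s' * R t a s') + γ * ∑ s', P t a s' * V' s') := by
    intro t
    by_cases ht : t = s₀
    · subst ht
      have hπ'eq : ∀ a, π' t a = if a = a₀ then 1 else 0 := by
        intro a; simp only [hπ'def]; exact if_pos trivial
      have hsum : ∑ a, π' t a *
          ((∑ s', P t a s' * R t a s') + γ * ∑ s', P t a s' * V' s')
          = (∑ s', P t a₀ s' * R t a₀ s') + γ * ∑ s', P t a₀ s' * V' s' := by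
        rw [Finset.sum_congr rfl fun a _ => by rw [hπ'eq a]]
        rw [Finset.sum_eq_single a₀]
        · rw [if_pos rfl, one_mul]
        · intro b _ hb; rw [if_neg hb, zero_mul]
        · intro hmem; exact absurd (Finset.mem_univ a₀) hmem
      rw [hsum]
      have hVt : V' t = Q0 := by simp only [hV'def]; exact if_pos trivial
      rw [hVt, hQ0]
      have := hmono t a₀
      nlinarith
    · have hπ'eq : ∀ a, π' t a = π t a := by
        intro a; simp only [hπ'def]; rw [if_neg ht]
      have hVt : V' t = Vp t := by simp only [hV'def]; rw [if_neg ht]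
      rw [hVt, Finset.sum_congr rfl fun a _ => by rw [hπ'eq a]]
      have hb := bellman_eq R hP hπ hγ0 hγ1 (γ := γ) t
      rw [hVp, hb]
      refine Finset.sum_le_sum fun a _ => ?_
      refine mul_le_mul_of_nonneg_left ?_ (hπ.1 t a)
      have := hmono t a
      simp only [← hVp]
      nlinarith
  have h1 : V' s₀ ≤ policyValue P R γ π' s₀ := value_ge hP hπ' hγ0 hγ1 V' hyp s₀
  have h2 := hopt π' hπ' s₀
  have h3 : V' s₀ = Q0 := by simp only [hV'def]; exact if_pos trivial
  rw [h3] at h1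
  linarith


end MDP2

section Multi

lemma sum_pi_prod_single {n : ℕ} {T : Fin n → Type} [∀ i, Fintype (T i)]
    (p : ∀ i, T i → ℝ) (hp : ∀ i, ∑ x, p i x = 1) (i : Fin n) (f : T i → ℝ) :
    ∑ x : ∀ j, T j, (∏ j, p j (x j)) * f (x i) = ∑ t, p i t * f t := by
  classical
  set g : ∀ j, T j → ℝ := Function.update (fun j (_ : T j) => (1 : ℝ)) i f with hg
  have hgi : g i = f := by rw [hg]; exact Function.update_self (β := fun j => T j → ℝ) i f _
  have hgj : ∀ j, j ≠ i → g j = fun _ => (1 : ℝ) := by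
    intro j hj; rw [hg]; exact Function.update_of_ne (β := fun j => T j → ℝ) hj f _
  have key : ∀ x : ∀ j, T j, (∏ j, p j (x j)) * f (x i) = ∏ j, (p j (x j) * g j (x j)) := by
    intro x
    rw [Finset.prod_mul_distrib]
    congr 1
    rw [Finset.prod_eq_single i]
    · rw [hgi]
    · intro j _ hj; rw [hgj j hj]
    · intro h; exact absurd (Finset.mem_univ i) h
  rw [Finset.sum_congr rfl fun x _ => key x,
    ← Fintype.prod_sum (f := fun j t => p j t * g j t)]
  rw [Finset.prod_eq_single i]
  · rw [hgi]
  · intro j _ hj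
    rw [Finset.sum_congr rfl fun t _ => by rw [hgj j hj]]
    simpa using hp j
  · intro h; exact absurd (Finset.mem_univ i) h

lemma sum_pi_prod_mul_sum {n : ℕ} {T : Fin n → Type} [∀ i, Fintype (T i)]
    (p : ∀ i, T i → ℝ) (hp : ∀ i, ∑ x, p i x = 1) (f : ∀ i, T i → ℝ) :
    ∑ x : ∀ j, T j, (∏ j, p j (x j)) * (∑ i, f i (x i)) = ∑ i, ∑ t, p i t * f i t := by
  have : ∀ x : ∀ j, T j, (∏ j, p j (x j)) * (∑ i, f i (x i))
      = ∑ i, (∏ j, p j (x j)) * f i (x i) := fun x => Finset.mul_sum _ _ _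
  rw [Finset.sum_congr rfl fun x _ => this x, Finset.sum_comm]
  exact Finset.sum_congr rfl fun i _ => sum_pi_prod_single p hp i (f i)

end Multi


/-- In a separable multi-agent MDP, the product of per-agent optimal policies
is an optimal joint policy. -/
theorem separable_product_policy_optimal {N : ℕ} (S A : Fin N → Type)
    [∀ i, Fintype (S i)] [∀ i, Fintype (A i)] [∀ i, DecidableEq (S i)]
    (P : ∀ i, S i → A i → S i → ℝ) (R : ∀ i, S i → A i → S i → ℝ)
    (hP : ∀ i, IsKernel (P i)) (γ : ℝ) (hγ0 : 0 ≤ γ) (hγ1 : γ < 1)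
    (π : ∀ i, S i → A i → ℝ) (hπ : ∀ i, IsPolicy (π i))
    (hopt : ∀ i, ∀ π' : S i → A i → ℝ, IsPolicy π' → ∀ s,
      policyValue (P i) (R i) γ π' s ≤ policyValue (P i) (R i) γ (π i) s) :
    ∀ π' : (∀ i, S i) → (∀ i, A i) → ℝ, IsPolicy π' → ∀ s : ∀ i, S i,
      policyValue (S := ∀ i, S i) (A := ∀ i, A i)
          (fun s a s' => ∏ i, P i (s i) (a i) (s' i))
          (fun s a s' => ∑ i, R i (s i) (a i) (s' i)) γ π' s ≤
        policyValue (S := ∀ i, S i) (A := ∀ i, A i)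
          (fun s a s' => ∏ i, P i (s i) (a i) (s' i))
          (fun s a s' => ∑ i, R i (s i) (a i) (s' i)) γ
          (fun s a => ∏ i, π i (s i) (a i)) s := by
  intro π' hπ' s₀
  classical
  set Pb : (∀ i, S i) → (∀ i, A i) → (∀ i, S i) → ℝ :=
    fun s a s' => ∏ i, P i (s i) (a i) (s' i) with hPb
  set Rb : (∀ i, S i) → (∀ i, A i) → (∀ i, S i) → ℝ :=
    fun s a s' => ∑ i, R i (s i) (a i) (s' i) with hRb
  set πb : (∀ i, S i) → (∀ i, A i) → ℝ := fun s a => ∏ i, π i (s i) (a i) with hπb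
  have hPbK : IsKernel Pb := by
    constructor
    · intro s a s'
      exact Finset.prod_nonneg fun i _ => (hP i).1 _ _ _
    · intro s a
      rw [hPb]
      rw [← Fintype.prod_sum (f := fun i t => P i (s i) (a i) t)]
      exact Finset.prod_eq_one fun i _ => (hP i).2 _ _
  have hπbP : IsPolicy πb := by
    constructor
    · intro s a
      exact Finset.prod_nonneg fun i _ => (hπ i).1 _ _
    · intro s
      rw [hπb]
      rw [← Fintype.prod_sum (f := fun i b => π i (s i) b)]
      exact Finset.prod_eq_one fun i _ => (hπ i).2 _
  set Vb : (∀ i, S i) → ℝ := fun s => ∑ i, policyValue (P i) (R i) γ (π i) (s i) with hVb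
  -- the key identity: joint one-step backup decomposes
  have hE : ∀ (s : ∀ i, S i) (a : ∀ i, A i),
      (∑ s', Pb s a s' * Rb s a s') + γ * ∑ s', Pb s a s' * Vb s'
        = ∑ i, ((∑ t, P i (s i) (a i) t * R i (s i) (a i) t)
            + γ * ∑ t, P i (s i) (a i) t * policyValue (P i) (R i) γ (π i) t) := by
    intro s a
    have h1 : (∑ s', Pb s a s' * Rb s a s')
        = ∑ i, ∑ t, P i (s i) (a i) t * R i (s i) (a i) t :=
      sum_pi_prod_mul_sum (fun i t => P i (s i) (a i) t)
        (fun i => (hP i).2 _ _) (fun i t => R i (s i) (a i) t)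
    have h2 : (∑ s', Pb s a s' * Vb s')
        = ∑ i, ∑ t, P i (s i) (a i) t * policyValue (P i) (R i) γ (π i) t :=
      sum_pi_prod_mul_sum (fun i t => P i (s i) (a i) t)
        (fun i => (hP i).2 _ _) (fun i t => policyValue (P i) (R i) γ (π i) t)
    rw [h1, h2, Finset.mul_sum, ← Finset.sum_add_distrib]
  have hQle : ∀ (s : ∀ i, S i) (a : ∀ i, A i),
      (∑ s', Pb s a s' * Rb s a s') + γ * ∑ s', Pb s a s' * Vb s' ≤ Vb s := by
    intro s a
    rw [hE s a]
    exact Finset.sum_le_sum fun i _ =>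
      q_le_value (hP i) (hπ i) hγ0 hγ1 (hopt i) (s i) (a i)
  have hclaim1 : policyValue Pb Rb γ π' s₀ ≤ Vb s₀ := by
    refine value_le hPbK hπ' hγ0 hγ1 Vb (fun s => ?_) s₀
    calc ∑ a, π' s a * ((∑ s', Pb s a s' * Rb s a s') + γ * ∑ s', Pb s a s' * Vb s')
        ≤ ∑ a, π' s a * Vb s :=
          Finset.sum_le_sum fun a _ =>
            mul_le_mul_of_nonneg_left (hQle s a) (hπ'.1 s a)
      _ = Vb s := by rw [← Finset.sum_mul, hπ'.2 s, one_mul]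
  have hclaim2 : Vb s₀ ≤ policyValue Pb Rb γ πb s₀ := by
    refine value_ge hPbK hπbP hγ0 hγ1 Vb (fun s => ?_) s₀
    have heq : ∑ a, πb s a * ((∑ s', Pb s a s' * Rb s a s') + γ * ∑ s', Pb s a s' * Vb s')
        = ∑ i, ∑ b, π i (s i) b *
            ((∑ t, P i (s i) b t * R i (s i) b t)
              + γ * ∑ t, P i (s i) b t * policyValue (P i) (R i) γ (π i) t) := by
      rw [Finset.sum_congr rfl fun a _ => by rw [hE s a]]
      exact sum_pi_prod_mul_sum (fun i b => π i (s i) b) (fun i => (hπ i).2 _)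
        (fun i b => (∑ t, P i (s i) b t * R i (s i) b t)
          + γ * ∑ t, P i (s i) b t * policyValue (P i) (R i) γ (π i) t)
    rw [heq]
    refine Finset.sum_le_sum fun i _ => ?_
    exact le_of_eq (bellman_eq (R i) (hP i) (hπ i) hγ0 hγ1 (s i))
  exact le_trans hclaim1 hclaim2
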